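/- Let N be a finite nonempty player set, 0 < c < p reals, and for each nonempty S ⊆ N let 0 ≤ a_S < b_S be reals; set α = (p−c)/p, q*_S = a_S + (b_S − a_S)·(p−c)/p, and let ν_S = U_α[p·a_S − c·q*_S, (p−c)·q*_S] be the distribution of the coalition profit. Let r : N → ℝ with r_i ≥ 0 for all i and r(N) = 1. Then for every nonempty S ⊆ N, the pushforward of ν_N under the map z ↦ r(S)·z second-order stochastically dominates ν_S if and only if r(S)·(a_N·p − (b_N − a_N)·c) ≥ a_S·p − (b_S − a_S)·c and r(S)·(a_N·(p+c) + b_N·(p−c)) ≥ a_S·(p+c) + b_S·(p−c). -/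

import Mathlib

open MeasureTheory ProbabilityTheory
open scoped NNReal ENNReal

/-- `P` second-order stochastically dominates `Q`. -/
def SSD (P Q : Measure ℝ) : Prop :=
  ∀ u : ℝ, (∫ z in Set.Iic u, (cdf P z - cdf Q z)) ≤ 0

/-- The uniform probability measure on the interval `[a, b]`. -/
noncomputable def unif (a b : ℝ) : Measure ℝ :=
  (ENNReal.ofReal (b - a))⁻¹ • (volume.restrict (Set.Icc a b))

/-- The `α`-cut uniform measure `U_α[a, b] = α·Unif[a,b] + (1−α)·δ_b`. -/
noncomputable def alphaCutUnif (α a b : ℝ) : Measure ℝ :=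
  ENNReal.ofReal α • unif a b + ENNReal.ofReal (1 - α) • Measure.dirac b

section Aux

open Set

/-- Explicit cdf of the α-cut uniform measure. -/
noncomputable def Fpw (α a b z : ℝ) : ℝ :=
  if z < a then 0 else if z < b then α*(z-a)/(b-a) else 1

/-- Explicit integrated cdf. -/
noncomputable def Gpw (α a b u : ℝ) : ℝ :=
  if u ≤ a then 0 else if u ≤ b then α*(u-a)^2/(2*(b-a)) else α*(b-a)/2 + (u-b)

variable {α a b a' b' z u : ℝ}

lemma measurable_Fpw : Measurable (Fpw α a b) := by
  unfold Fpw
  apply Measurable.ite measurableSet_Iio measurable_const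
  apply Measurable.ite measurableSet_Iio _ measurable_const
  exact ((measurable_id.sub_const a).const_mul α).div_const (b-a)

lemma Fpw_nonneg (hα0 : 0 ≤ α) : 0 ≤ Fpw α a b z := by
  unfold Fpw; split_ifs with h1 h2
  · norm_num
  · push_neg at h1
    exact div_nonneg (mul_nonneg hα0 (by linarith)) (by linarith)
  · norm_num

lemma Fpw_le_one (hα0 : 0 ≤ α) (hα1 : α ≤ 1) : Fpw α a b z ≤ 1 := by
  unfold Fpw; split_ifs with h1 h2
  · norm_num
  · push_neg at h1
    rw [div_le_one (by linarith)]
    nlinarith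
  · norm_num

lemma integrableOn_Fpw_finite (hα0 : 0 ≤ α) (hα1 : α ≤ 1) {s : Set ℝ}
    (hfin : volume s ≠ ⊤) : IntegrableOn (Fpw α a b) s := by
  apply Integrable.mono' (g := fun _ => (1:ℝ))
    (integrableOn_const hfin)
    measurable_Fpw.aestronglyMeasurable
  filter_upwards with x
  rw [Real.norm_eq_abs, abs_le]
  exact ⟨by linarith [Fpw_nonneg (a := a) (b := b) (z := x) hα0],
    Fpw_le_one hα0 hα1⟩

lemma Fpw_ae_zero_Iic (v : ℝ) (hv : v ≤ a) :
    Fpw α a b =ᵐ[volume.restrict (Iic v)] (fun _ => (0:ℝ)) := by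
  have h0 : ∀ᵐ z : ℝ ∂volume, z ≠ a := by rw [ae_iff]; simp
  rw [Filter.EventuallyEq, ae_restrict_iff' measurableSet_Iic]
  filter_upwards [h0] with z hz hz2
  rw [Fpw, if_pos (lt_of_le_of_ne (le_trans hz2 hv) hz)]

lemma integrableOn_Fpw_Iic (hα0 : 0 ≤ α) (hα1 : α ≤ 1) (u : ℝ) :
    IntegrableOn (Fpw α a b) (Iic u) := by
  rcases le_or_gt u a with h | h
  · exact (integrable_congr (Fpw_ae_zero_Iic u h)).2 integrableOn_zero
  · rw [← Set.Iic_union_Ioc_eq_Iic h.le]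
    apply IntegrableOn.union
    · exact (integrable_congr (Fpw_ae_zero_Iic a le_rfl)).2 integrableOn_zero
    · exact integrableOn_Fpw_finite hα0 hα1 (by simp)

lemma integral_sub_sq (a u : ℝ) : ∫ z in a..u, (z - a) = (u-a)^2/2 := by
  rw [intervalIntegral.integral_sub intervalIntegral.intervalIntegrable_id
    intervalIntegrable_const, integral_id, intervalIntegral.integral_const]
  simp; ring

lemma integral_Fpw_mid {v : ℝ} (hab : a < b) (h : a < v) (hv : v ≤ b) :
    ∫ z in Ioc a v, Fpw α a b z = α*(v-a)^2/(2*(b-a)) := by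
  rw [MeasureTheory.integral_Ioc_eq_integral_Ioo]
  rw [setIntegral_congr_fun measurableSet_Ioo
    (g := fun z => (α/(b-a)) * (z-a)) ?_]
  · rw [← MeasureTheory.integral_Ioc_eq_integral_Ioo,
      ← intervalIntegral.integral_of_le (le_of_lt h),
      intervalIntegral.integral_const_mul, integral_sub_sq]
    field_simp
  · intro z hz
    show Fpw α a b z = α/(b-a)*(z-a)
    rw [Fpw, if_neg (by simp [le_of_lt hz.1]), if_pos (lt_of_lt_of_le hz.2 hv)]
    ring

lemma integral_Fpw (hα0 : 0 ≤ α) (hα1 : α ≤ 1) (hab : a ≤ b) (u : ℝ) :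
    ∫ z in Iic u, Fpw α a b z = Gpw α a b u := by
  have hint : ∀ s : Set ℝ, volume s ≠ ⊤ → IntegrableOn (Fpw α a b) s :=
    fun s hs => integrableOn_Fpw_finite hα0 hα1 hs
  rcases le_or_gt u a with h | h
  · rw [integral_congr_ae (Fpw_ae_zero_Iic u h), integral_zero, Gpw, if_pos h]
  · rw [← Set.Iic_union_Ioc_eq_Iic h.le,
      setIntegral_union (Set.Iic_disjoint_Ioc le_rfl) measurableSet_Ioc
        ((integrable_congr (Fpw_ae_zero_Iic a le_rfl)).2 integrableOn_zero)
        (hint _ (by simp)),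
      integral_congr_ae (Fpw_ae_zero_Iic a le_rfl), integral_zero, zero_add]
    rcases eq_or_lt_of_le hab with rfl | hab'
    · rw [setIntegral_congr_fun measurableSet_Ioc (g := fun _ => (1:ℝ)) ?_]
      · rw [setIntegral_const, measureReal_def, Real.volume_Ioc, smul_eq_mul, mul_one,
          ENNReal.toReal_ofReal (by linarith)]
        rw [Gpw, if_neg (not_le.2 h), if_neg (not_le.2 h)]
        ring
      · intro z hz
        show Fpw α a a z = 1
        rw [Fpw, if_neg (not_lt.2 hz.1.le), if_neg (not_lt.2 hz.1.le)]
    · rcases le_or_gt u b with hub | hub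
      · rw [integral_Fpw_mid hab' h hub, Gpw, if_neg (not_le.2 h), if_pos hub]
      · rw [← Set.Ioc_union_Ioc_eq_Ioc hab hub.le,
          setIntegral_union (Set.Ioc_disjoint_Ioc.2 (inf_le_left.trans le_sup_right))
            measurableSet_Ioc (hint _ (by simp)) (hint _ (by simp)),
          integral_Fpw_mid hab' hab' le_rfl]
        rw [setIntegral_congr_fun measurableSet_Ioc (g := fun _ => (1:ℝ)) ?_]
        · rw [setIntegral_const, measureReal_def, Real.volume_Ioc, smul_eq_mul, mul_one,
            ENNReal.toReal_ofReal (by linarith)]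
          rw [Gpw, if_neg (by linarith), if_neg (by linarith)]
          have hba : b - a ≠ 0 := ne_of_gt (by linarith)
          field_simp
        · intro z hz
          show Fpw α a b z = 1
          rw [Fpw, if_neg (by push_neg; linarith [hz.1]), if_neg (not_lt.2 hz.1.le)]

lemma measure_Iic_alphaCutUnif (hα0 : 0 ≤ α) (hα1 : α ≤ 1) (hab : a < b) (z : ℝ) :
    alphaCutUnif α a b (Iic z) = ENNReal.ofReal (Fpw α a b z) := by
  have hba : (0:ℝ) < b - a := by linarith
  rw [alphaCutUnif, Measure.add_apply, Measure.smul_apply, Measure.smul_apply,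
    Measure.dirac_apply' _ measurableSet_Iic, unif, Measure.smul_apply,
    Measure.restrict_apply measurableSet_Iic,
    smul_eq_mul, smul_eq_mul, smul_eq_mul]
  unfold Fpw
  split_ifs with h1 h2
  · have : Iic z ∩ Icc a b = ∅ := by
      ext x; simp only [mem_inter_iff, mem_Iic, mem_Icc, mem_empty_iff_false, iff_false]
      rintro ⟨hx, hx2, _⟩; linarith
    rw [this]
    have hb : b ∉ Iic z := by simp only [mem_Iic]; push_neg; linarith
    simp [indicator_of_notMem hb]
  · push_neg at h1
    have : Iic z ∩ Icc a b = Icc a z := by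
      ext x; simp only [mem_inter_iff, mem_Iic, mem_Icc]
      constructor
      · rintro ⟨hx, hx2, hx3⟩; exact ⟨hx2, hx⟩
      · rintro ⟨hx, hx2⟩; exact ⟨hx2, hx, by linarith⟩
    rw [this, Real.volume_Icc]
    have hb : b ∉ Iic z := by simp only [mem_Iic]; push_neg; linarith
    rw [indicator_of_notMem hb, mul_zero, add_zero,
      ENNReal.ofReal_div_of_pos hba, div_eq_mul_inv, ENNReal.ofReal_mul hα0, mul_assoc,
      mul_comm (ENNReal.ofReal (b-a))⁻¹]
  · push_neg at h1 h2
    have : Iic z ∩ Icc a b = Icc a b := by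
      rw [inter_eq_right]; intro x hx; exact le_trans hx.2 h2
    rw [this, Real.volume_Icc,
      ENNReal.inv_mul_cancel (by simp; linarith) ENNReal.ofReal_ne_top]
    have hb : b ∈ Iic z := by simpa using h2
    rw [indicator_of_mem hb]
    simp [← ENNReal.ofReal_add hα0 (by linarith : (0:ℝ) ≤ 1 - α)]

lemma isProb_alphaCutUnif (hα0 : 0 ≤ α) (hα1 : α ≤ 1) (hab : a < b) :
    IsProbabilityMeasure (alphaCutUnif α a b) := by
  constructor
  rw [alphaCutUnif, Measure.add_apply, Measure.smul_apply, Measure.smul_apply,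
    Measure.dirac_apply' _ MeasurableSet.univ, unif, Measure.smul_apply,
    Measure.restrict_apply MeasurableSet.univ, Set.univ_inter, Real.volume_Icc,
    smul_eq_mul, smul_eq_mul, smul_eq_mul]
  rw [ENNReal.inv_mul_cancel (by simp; linarith) ENNReal.ofReal_ne_top]
  simp [← ENNReal.ofReal_add hα0 (by linarith : (0:ℝ) ≤ 1 - α)]

lemma cdf_alphaCutUnif (hα0 : 0 ≤ α) (hα1 : α ≤ 1) (hab : a < b) (z : ℝ) :
    cdf (alphaCutUnif α a b) z = Fpw α a b z := by
  have := isProb_alphaCutUnif hα0 hα1 hab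
  rw [cdf_eq_real, measureReal_def, measure_Iic_alphaCutUnif hα0 hα1 hab,
    ENNReal.toReal_ofReal (Fpw_nonneg hα0)]

lemma cdf_map_mul {ρ : ℝ} (hρ : 0 < ρ) (hα0 : 0 ≤ α) (hα1 : α ≤ 1) (hab : a < b)
    (z : ℝ) :
    cdf ((alphaCutUnif α a b).map (fun z => ρ * z)) z = Fpw α (ρ*a) (ρ*b) z := by
  have hinst := isProb_alphaCutUnif hα0 hα1 hab
  have hmeas : Measurable (fun z : ℝ => ρ * z) := measurable_const_mul ρ
  have : IsProbabilityMeasure ((alphaCutUnif α a b).map (fun z => ρ * z)) :=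
    Measure.isProbabilityMeasure_map hmeas.aemeasurable
  rw [cdf_eq_real, measureReal_def, Measure.map_apply hmeas measurableSet_Iic]
  have hpre : (fun z : ℝ => ρ * z) ⁻¹' (Iic z) = Iic (z/ρ) := by
    ext x
    simp only [mem_preimage, mem_Iic]
    rw [le_div_iff₀ hρ, mul_comm]
  rw [hpre, measure_Iic_alphaCutUnif hα0 hα1 hab,
    ENNReal.toReal_ofReal (Fpw_nonneg hα0)]
  unfold Fpw
  have e1 : z/ρ < a ↔ z < ρ*a := by rw [div_lt_iff₀ hρ, mul_comm]
  have e2 : z/ρ < b ↔ z < ρ*b := by rw [div_lt_iff₀ hρ, mul_comm]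
  by_cases h1 : z/ρ < a
  · rw [if_pos h1, if_pos (e1.1 h1)]
  · rw [if_neg h1, if_neg (fun h => h1 (e1.2 h))]
    by_cases h2 : z/ρ < b
    · rw [if_pos h2, if_pos (e2.1 h2)]
      have hρ' : ρ ≠ 0 := ne_of_gt hρ
      have hba : b - a ≠ 0 := ne_of_gt (by linarith)
      rw [show ρ * b - ρ * a = ρ * (b - a) by ring]
      field_simp
    · rw [if_neg h2, if_neg (fun h => h2 (e2.2 h))]

lemma cdf_dirac_zero (z : ℝ) : cdf (Measure.dirac (0:ℝ)) z = Fpw α 0 0 z := by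
  rw [cdf_eq_real, measureReal_def, Measure.dirac_apply' _ measurableSet_Iic]
  unfold Fpw
  by_cases h : (0:ℝ) ≤ z
  · rw [indicator_of_mem (by simpa using h)]
    rw [if_neg (by linarith), if_neg (by linarith)]
    simp
  · rw [indicator_of_notMem (by simpa using h)]
    rw [if_pos (by linarith)]
    simp

lemma key_iff (hα0 : 0 < α) (hα1 : α < 1) (hab : a < b) (hab' : a' < b') :
    (∀ u, Gpw α a' b' u ≤ Gpw α a b u) ↔
      (a ≤ a' ∧ b - α*(b-a)/2 ≤ b' - α*(b'-a')/2) := by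
  constructor
  · intro h
    have haa : a ≤ a' := by
      by_contra hcon
      push_neg at hcon
      have h1 := h a
      have e2 : Gpw α a b a = 0 := by rw [Gpw, if_pos le_rfl]
      rw [e2, Gpw, if_neg (not_le.2 hcon)] at h1
      split_ifs at h1 with h2
      · have := div_pos (mul_pos hα0 (show (0:ℝ) < (a-a')^2 by nlinarith))
          (show (0:ℝ) < 2*(b'-a') by linarith)
        linarith
      · push_neg at h2; nlinarith
    refine ⟨haa, ?_⟩
    have h1 := h (max b b' + 1)
    rw [Gpw, if_neg (by push_neg; linarith [le_max_right b b']),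
      if_neg (by push_neg; linarith [le_max_right b b']),
      Gpw, if_neg (by push_neg; linarith [le_max_left b b']),
      if_neg (by push_neg; linarith [le_max_left b b'])] at h1
    linarith
  · rintro ⟨haa, hm⟩ u
    rw [Gpw, Gpw]
    split_ifs with h1 h2 h3 h4 h5 h6 h7 h8
    · norm_num
    · exact div_nonneg (mul_nonneg hα0.le (sq_nonneg _)) (by linarith)
    · nlinarith [mul_pos hα0 (show (0:ℝ) < b - a by linarith)]
    · linarith
    · rw [div_le_div_iff₀ (by linarith) (by linarith)]
      rcases le_or_gt (b - a) (b' - a') with hw | hw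
      · nlinarith [mul_nonneg (show (0:ℝ) ≤ (u-a)^2-(u-a')^2 by nlinarith) (show (0:ℝ) ≤ b'-a' by linarith),
          mul_nonneg (sq_nonneg (u-a')) (show (0:ℝ) ≤ (b'-a')-(b-a) by linarith), hα0.le]
      · nlinarith [mul_nonneg (mul_nonneg (show (0:ℝ) ≤ b' - a' - (u - a') by linarith) (show (0:ℝ) ≤ u - a' by linarith)) (show (0:ℝ) ≤ (b-a) - (b'-a') by linarith),
          mul_nonneg (mul_nonneg (show (0:ℝ) ≤ u - a' by linarith) (show (0:ℝ) ≤ b' - a' by linarith)) (show (0:ℝ) ≤ 2*(a'-a) - ((b-a)-(b'-a')) by nlinarith [mul_nonneg (show (0:ℝ) ≤ 1-α by linarith) (show (0:ℝ) ≤ (b-a)-(b'-a') by linarith)]),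
          mul_nonneg (sq_nonneg (a'-a)) (show (0:ℝ) ≤ b'-a' by linarith), hα0.le]
    · rw [div_le_iff₀ (by linarith)]
      nlinarith [mul_nonneg (mul_nonneg hα0.le (show (0:ℝ) ≤ u - a' by linarith)) (show (0:ℝ) ≤ b' - a' - (u - a') by linarith),
        mul_nonneg (show (0:ℝ) ≤ b' - a' by linarith) (show (0:ℝ) ≤ (2-α)*(u-b) + α*(a'-a) by nlinarith)]
    · linarith
    · rw [le_div_iff₀ (by linarith)]
      nlinarith [sq_nonneg (b - u),
        mul_nonneg (mul_nonneg (show (0:ℝ) ≤ 1 - α by linarith) (show (0:ℝ) ≤ b - u by linarith)) (show (0:ℝ) ≤ b - a by linarith),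
        mul_nonneg (show (0:ℝ) ≤ b - a by linarith) (show (0:ℝ) ≤ α*((b-a)-(b'-a')) - 2*(b-b') by linarith)]
    · linarith

end Aux

set_option maxHeartbeats 1000000 in
/-- In the stochastic multiple newsvendors game with uniformly distributed demands, a
stochastic payoff without transfer payments SSD-dominates the profit of coalition `S` iff
`r(S)·(a_N·p − (b_N − a_N)·c) ≥ a_S·p − (b_S − a_S)·c` and
`r(S)·(a_N·(p+c) + b_N·(p−c)) ≥ a_S·(p+c) + b_S·(p−c)`. -/
theorem ssd_core_newsvendors_iff {N : Type*} [Fintype N] [DecidableEq N] [Nonempty N]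
    (c p : ℝ) (hc : 0 < c) (hcp : c < p)
    (a b : Finset N → ℝ)
    (ha : ∀ S : Finset N, S.Nonempty → 0 ≤ a S)
    (hab : ∀ S : Finset N, S.Nonempty → a S < b S)
    (qStar : Finset N → ℝ)
    (hq : ∀ S : Finset N, S.Nonempty → qStar S = a S + (b S - a S) * (p - c) / p)
    (ν : Finset N → Measure ℝ)
    (hν : ∀ S : Finset N, S.Nonempty →
      ν S = alphaCutUnif ((p - c) / p) (p * a S - c * qStar S) ((p - c) * qStar S))
    (r : N → ℝ) (hr : ∀ i, 0 ≤ r i) (hrN : ∑ i : N, r i = 1) :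
    ∀ S : Finset N, S.Nonempty →
      (SSD ((ν Finset.univ).map (fun z => (∑ i ∈ S, r i) * z)) (ν S) ↔
        (a S * p - (b S - a S) * c ≤
            (∑ i ∈ S, r i) * (a Finset.univ * p - (b Finset.univ - a Finset.univ) * c)) ∧
          (a S * (p + c) + b S * (p - c) ≤
            (∑ i ∈ S, r i) * (a Finset.univ * (p + c) + b Finset.univ * (p - c)))) := by
  intro S hS
  have hp : 0 < p := lt_trans hc hcp
  have hp' : p ≠ 0 := ne_of_gt hp
  have hNne : (Finset.univ : Finset N).Nonempty := Finset.univ_nonempty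
  rw [hν S hS, hν Finset.univ hNne]
  set α : ℝ := (p - c) / p with hα
  have hα0 : 0 < α := div_pos (by linarith) hp
  have hα1 : α < 1 := by rw [hα, div_lt_one hp]; linarith
  set ρ := ∑ i ∈ S, r i with hρdef
  have hρ0 : 0 ≤ ρ := Finset.sum_nonneg fun i _ => hr i
  have habS := hab S hS
  have haS := ha S hS
  have habN := hab _ hNne
  have haN := ha _ hNne
  have keyalg : ∀ T : Finset N, T.Nonempty →
      (p * a T - c * qStar T = α * (a T * p - (b T - a T) * c)) ∧
      ((p - c) * qStar T - (p * a T - c * qStar T) = (b T - a T) * (p - c)) ∧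
      ((p - c) * qStar T - α * ((p - c) * qStar T - (p * a T - c * qStar T)) / 2
        = (α/2) * (a T * (p + c) + b T * (p - c))) := by
    intro T hT
    rw [hq T hT, hα]
    refine ⟨by field_simp; ring, by field_simp; ring, by field_simp; ring⟩
  have hABS : p * a S - c * qStar S < (p - c) * qStar S := by
    have h1 := (keyalg S hS).2.1
    have h2 : 0 < (b S - a S) * (p - c) := mul_pos (by linarith) (by linarith)
    linarith
  have hABN : p * a Finset.univ - c * qStar Finset.univ < (p - c) * qStar Finset.univ := by
    have h1 := (keyalg _ hNne).2.1
    have h2 : 0 < (b Finset.univ - a Finset.univ) * (p - c) := mul_pos (by linarith) (by linarith)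
    linarith
  rcases eq_or_lt_of_le hρ0 with hρz | hρpos
  · -- ρ = 0 : both sides false
    apply iff_of_false
    · intro hSSD
      have hprob := isProb_alphaCutUnif hα0.le hα1.le hABN
      have hmap : (alphaCutUnif α (p * a Finset.univ - c * qStar Finset.univ)
          ((p - c) * qStar Finset.univ)).map (fun z => ρ * z) = Measure.dirac (0:ℝ) := by
        rw [← hρz]
        simp only [zero_mul]
        rw [Measure.map_const, measure_univ, one_smul]
      rw [SSD] at hSSD
      rw [hmap] at hSSD
      have h1 := hSSD ((p - c) * qStar S)
      simp only [cdf_dirac_zero (α := α), cdf_alphaCutUnif hα0.le hα1.le hABS] at h1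
      rw [integral_sub (integrableOn_Fpw_Iic hα0.le hα1.le _)
          (integrableOn_Fpw_Iic hα0.le hα1.le _),
        integral_Fpw hα0.le hα1.le le_rfl _, integral_Fpw hα0.le hα1.le hABS.le _] at h1
      have hqS : 0 < qStar S := by
        rw [hq S hS]
        have : 0 < (b S - a S) * (p - c) / p :=
          div_pos (mul_pos (by linarith) (by linarith)) hp
        linarith
      have hBpos : 0 < (p - c) * qStar S := mul_pos (by linarith) hqS
      rw [Gpw, if_neg (not_le.2 hBpos), if_neg (not_le.2 hBpos)] at h1
      rw [Gpw, if_neg (not_le.2 hABS), if_pos le_rfl] at h1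
      have hw : (0:ℝ) < (p - c) * qStar S - (p * a S - c * qStar S) := by linarith
      have e : α * ((p - c) * qStar S - (p * a S - c * qStar S))^2
          / (2 * ((p - c) * qStar S - (p * a S - c * qStar S)))
          = α * ((p - c) * qStar S - (p * a S - c * qStar S)) / 2 := by
        have hne : (p - c) * qStar S - (p * a S - c * qStar S) ≠ 0 := ne_of_gt hw
        field_simp
      rw [e] at h1
      have hmean := (keyalg S hS).2.2
      have hY : 0 < a S * (p + c) + b S * (p - c) := by
        nlinarith [mul_nonneg haS (show (0:ℝ) ≤ p + c by linarith),
          mul_pos (show (0:ℝ) < b S by linarith) (show (0:ℝ) < p - c by linarith)]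
      nlinarith [mul_pos (half_pos hα0) hY]
    · rintro ⟨h1, h2⟩
      rw [← hρz, zero_mul] at h2
      nlinarith [mul_nonneg haS (show (0:ℝ) ≤ p + c by linarith),
        mul_pos (show (0:ℝ) < b S by linarith) (show (0:ℝ) < p - c by linarith)]
  · -- ρ > 0
    have hABN' : ρ * (p * a Finset.univ - c * qStar Finset.univ)
        < ρ * ((p - c) * qStar Finset.univ) := by nlinarith
    have hiff : SSD ((alphaCutUnif α (p * a Finset.univ - c * qStar Finset.univ)
          ((p - c) * qStar Finset.univ)).map (fun z => ρ * z))
        (alphaCutUnif α (p * a S - c * qStar S) ((p - c) * qStar S)) ↔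
        ∀ u, Gpw α (ρ * (p * a Finset.univ - c * qStar Finset.univ))
            (ρ * ((p - c) * qStar Finset.univ)) u
          ≤ Gpw α (p * a S - c * qStar S) ((p - c) * qStar S) u := by
      rw [SSD]
      apply forall_congr'
      intro u
      simp only [cdf_map_mul hρpos hα0.le hα1.le hABN,
        cdf_alphaCutUnif hα0.le hα1.le hABS]
      rw [integral_sub (integrableOn_Fpw_Iic hα0.le hα1.le _)
          (integrableOn_Fpw_Iic hα0.le hα1.le _),
        integral_Fpw hα0.le hα1.le hABN'.le _, integral_Fpw hα0.le hα1.le hABS.le _,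
        sub_nonpos]
    rw [hiff, key_iff hα0 hα1 hABS hABN']
    apply and_congr
    · rw [(keyalg S hS).1,
        show ρ * (p * a Finset.univ - c * qStar Finset.univ)
          = α * (ρ * (a Finset.univ * p - (b Finset.univ - a Finset.univ) * c)) by
            rw [(keyalg _ hNne).1]; ring]
      constructor
      · intro h; nlinarith
      · intro h; nlinarith
    · have e3 := (keyalg S hS).2.2
      have e4 : ρ * ((p - c) * qStar Finset.univ)
          - α * (ρ * ((p - c) * qStar Finset.univ)
            - ρ * (p * a Finset.univ - c * qStar Finset.univ)) / 2
          = (α/2) * (ρ * (a Finset.univ * (p + c) + b Finset.univ * (p - c))) := by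
        have h5 := (keyalg _ hNne).2.2
        calc ρ * ((p - c) * qStar Finset.univ)
            - α * (ρ * ((p - c) * qStar Finset.univ)
              - ρ * (p * a Finset.univ - c * qStar Finset.univ)) / 2
            = ρ * ((p - c) * qStar Finset.univ
              - α * ((p - c) * qStar Finset.univ
                - (p * a Finset.univ - c * qStar Finset.univ)) / 2) := by ring
          _ = ρ * ((α/2) * (a Finset.univ * (p + c) + b Finset.univ * (p - c))) := by
              rw [h5]
          _ = (α/2) * (ρ * (a Finset.univ * (p + c) + b Finset.univ * (p - c))) := by ring
      rw [e3, e4]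
      constructor
      · intro h; nlinarith
      · intro h; nlinarith
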